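/- arXiv:1811.05552 — 2 statements merged into one kernel-verified Lean document; each statement's English description precedes it below -/
import Mathlib

section
/- Let (C, d₀) and (C, d) be two differentials on a finite-dimensional filtered vector space (C, 𝒜) over the Novikov field Λ_univ, both filtered (d*𝒜 ≤ 𝒜, d₀*𝒜 ≤ 𝒜), with d = d₀ + M where the filtration shift 𝒜(M) := inf_v (𝒜(v) - 𝒜(M(v))) satisfies 𝒜(M) ≥ A for some A > 0. Then the bar-length spectra of (C, d₀) and (C, d) coincide below A: for each k, β_k(C, d) < A implies β_k(C, d₀) = β_k(C, d), and conversely. -/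
/-- A family `e` is *orthogonal* for a filtration function `𝒜` and valuation `ν`. -/
def IsOrthFamily {Λ V ι : Type*} [Field Λ] [AddCommGroup V] [Module Λ V] [Fintype ι]
    (ν : Λ → EReal) (𝒜 : V → EReal) (e : ι → V) : Prop :=
  ∀ lam : ι → Λ,
    𝒜 (∑ i, lam i • e i) = Finset.univ.sup fun i => 𝒜 (e i) - ν (lam i)

/-- The multiset `S` of real numbers is the finite bar-length spectrum of the filtered
complex `(V, d, 𝒜)`: there is an orthogonal Usher–Zhang normal-form basis
`(ξ₁,…,ξ_B, ζ₁,…,ζ_K, η₁,…,η_K)` with `d ξᵢ = 0`, `d ζⱼ = ηⱼ`, and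
`S = {𝒜(ζⱼ) - 𝒜(ηⱼ)}`. -/
def IsBarSpectrum {Λ V : Type*} [Field Λ] [AddCommGroup V] [Module Λ V]
    (ν : Λ → EReal) (𝒜 : V → EReal) (d : V →ₗ[Λ] V) (S : Multiset ℝ) : Prop :=
  ∃ (B K : ℕ) (e : Fin B ⊕ Fin K ⊕ Fin K → V) (β : Fin K → ℝ),
    LinearIndependent Λ e ∧
    Submodule.span Λ (Set.range e) = ⊤ ∧
    IsOrthFamily ν 𝒜 e ∧
    (∀ i : Fin B, d (e (Sum.inl i)) = 0) ∧
    (∀ j : Fin K, d (e (Sum.inr (Sum.inl j))) = e (Sum.inr (Sum.inr j))) ∧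
    (∀ j : Fin K,
      𝒜 (e (Sum.inr (Sum.inl j))) - 𝒜 (e (Sum.inr (Sum.inr j))) = (β j : EReal)) ∧
    S = Finset.univ.val.map β


private lemma ereal_real {x : EReal} (h1 : x ≠ ⊥) (h2 : x ≠ ⊤) : ∃ r : ℝ, x = (r : EReal) := by
  induction x using EReal.rec with
  | bot => exact absurd rfl h1
  | coe r => exact ⟨r, rfl⟩
  | top => exact absurd rfl h2

private lemma nu_neg_one {Λ : Type*} [Field Λ] (ν : Λ → EReal)
    (hν_ne_bot : ∀ x : Λ, ν x ≠ ⊥) (hν_zero : ∀ x : Λ, ν x = ⊤ ↔ x = 0)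
    (hν_mul : ∀ x y : Λ, ν (x * y) = ν x + ν y) : ν (-1) = 0 := by
  have h1 : ν 1 = 0 := by
    have h := hν_mul 1 1
    rw [mul_one] at h
    obtain ⟨r, hr⟩ := ereal_real (hν_ne_bot 1) (fun hh => one_ne_zero ((hν_zero 1).mp hh))
    rw [hr] at h ⊢
    norm_cast at h ⊢
    linarith
  have h := hν_mul (-1) (-1)
  rw [neg_mul_neg, one_mul, h1] at h
  obtain ⟨r, hr⟩ := ereal_real (hν_ne_bot (-1))
    (fun hh => (neg_ne_zero.mpr (one_ne_zero (α := Λ))) ((hν_zero (-1)).mp hh))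
  rw [hr] at h ⊢
  norm_cast at h ⊢
  linarith

private lemma ereal_sub_zero (x : EReal) : x - 0 = x := by
  simp

private lemma filt_add_eq {Λ V : Type*} [Field Λ] [AddCommGroup V] [Module Λ V]
    (𝒜 : V → EReal) (h𝒜_max : ∀ x y : V, 𝒜 (x + y) ≤ max (𝒜 x) (𝒜 y))
    (hneg : ∀ x : V, 𝒜 (-x) = 𝒜 x) {x y : V} (h : 𝒜 y < 𝒜 x) : 𝒜 (x + y) = 𝒜 x := by
  refine le_antisymm ((h𝒜_max x y).trans_eq (max_eq_left h.le)) ?_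
  by_contra hc
  push_neg at hc
  have h2 : 𝒜 x ≤ max (𝒜 (x + y)) (𝒜 (-y)) := by
    have := h𝒜_max (x + y) (-y)
    rwa [add_neg_cancel_right] at this
  rw [hneg] at h2
  exact absurd h2 (not_le.mpr (max_lt hc h))

private lemma ereal_le_sub_of_add_le {x : EReal} {a b : ℝ} (h : x + (a : EReal) ≤ (b : EReal)) :
    x ≤ ((b - a : ℝ) : EReal) := by
  induction x using EReal.rec with
  | bot => exact bot_le
  | coe r =>
    rw [← EReal.coe_add] at h
    norm_cast at h ⊢
    linarith
  | top =>
    rw [EReal.top_add_coe] at h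
    exact absurd h (by simp)

private lemma filt_zeta {x : EReal} {bk re : ℝ} (hx_nb : x ≠ ⊥) (hx_nt : x ≠ ⊤)
    (h : x - (re : EReal) = (bk : EReal)) : x = ((bk + re : ℝ) : EReal) := by
  obtain ⟨r, hr⟩ := ereal_real hx_nb hx_nt
  rw [hr] at h ⊢
  rw [← EReal.coe_sub] at h
  norm_cast at h ⊢
  linarith

private lemma card_filter_le_eq (P : Multiset ℝ) (a : ℝ) :
    (P.filter (· ≤ a)).card = (P.filter (· < a)).card + P.count a := by
  induction P using Multiset.induction_on with
  | empty => simp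
  | cons x P ih =>
    rw [Multiset.filter_cons, Multiset.filter_cons, Multiset.count_cons]
    rcases lt_trichotomy x a with h | h | h
    · rw [if_pos h.le, if_pos h, if_neg (fun hh : a = x => absurd hh.symm h.ne)]
      simp only [Multiset.card_add, Multiset.card_singleton]
      omega
    · subst h
      rw [if_pos le_rfl, if_neg (lt_irrefl x), if_pos rfl]
      simp only [Multiset.card_add, Multiset.card_singleton, zero_add, Multiset.card_zero]
      omega
    · rw [if_neg (not_le.mpr h), if_neg (asymm h), if_neg (fun hh : a = x => absurd hh h.ne)]
      simp only [zero_add, Multiset.card_zero]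
      omega

private lemma eq_of_cumul (P Q : Multiset ℝ)
    (h : ∀ t : ℝ, (P.filter (· ≤ t)).card = (Q.filter (· ≤ t)).card) : P = Q := by
  classical
  rw [Multiset.ext]
  intro a
  have hlt : (P.filter (· < a)).card = (Q.filter (· < a)).card := by
    by_cases hE : ((P + Q).toFinset.filter (· < a)).Nonempty
    · set E := (P + Q).toFinset.filter (· < a) with hEdef
      set t' := E.max' hE with ht'
      have ht'a : t' < a := (Finset.mem_filter.mp (E.max'_mem hE)).2
      have hfil : ∀ R : Multiset ℝ, R ≤ P + Q → R.filter (· < a) = R.filter (· ≤ t') := by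
        intro R hR
        refine Multiset.filter_congr fun x hx => ?_
        constructor
        · intro hxa
          refine Finset.le_max' E x ?_
          exact Finset.mem_filter.mpr ⟨Multiset.mem_toFinset.mpr (Multiset.mem_of_le hR hx), hxa⟩
        · intro hxt
          exact lt_of_le_of_lt hxt ht'a
      rw [hfil P (Multiset.le_add_right P Q), hfil Q (Multiset.le_add_left Q P)]
      exact h t'
    · rw [Finset.not_nonempty_iff_eq_empty] at hE
      have hnone : ∀ R : Multiset ℝ, R ≤ P + Q → R.filter (· < a) = 0 := by
        intro R hR
        rw [Multiset.filter_eq_nil]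
        intro x hx hxa
        have : x ∈ (P + Q).toFinset.filter (· < a) :=
          Finset.mem_filter.mpr ⟨Multiset.mem_toFinset.mpr (Multiset.mem_of_le hR hx), hxa⟩
        rw [hE] at this
        exact absurd this (Finset.notMem_empty x)
      rw [hnone P (Multiset.le_add_right P Q), hnone Q (Multiset.le_add_left Q P)]
  have h1 := card_filter_le_eq P a
  have h2 := card_filter_le_eq Q a
  have h3 := h a
  omega

private lemma spec_card {K : ℕ} (β : Fin K → ℝ) (t : ℝ) [DecidablePred fun j : Fin K => β j ≤ t] :
    ((Finset.univ.val.map β).filter (· ≤ t)).card = Fintype.card {j : Fin K // β j ≤ t} := by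
  rw [Multiset.filter_map, Multiset.card_map, Fintype.card_subtype]
  have h1 : Multiset.filter ((fun x => x ≤ t) ∘ β) Finset.univ.val
      = Multiset.filter (fun j => β j ≤ t) Finset.univ.val :=
    Multiset.filter_congr (fun x _ => Iff.rfl)
  rw [h1, ← Finset.filter_val]
  rfl

private lemma bar_lower {Λ V : Type*} [Field Λ] [AddCommGroup V] [Module Λ V]
    (ν : Λ → EReal) (hν_ne_bot : ∀ x : Λ, ν x ≠ ⊥) (hν_zero : ∀ x : Λ, ν x = ⊤ ↔ x = 0)
    (𝒜 : V → EReal) (h𝒜_ne_top : ∀ x : V, 𝒜 x ≠ ⊤) (h𝒜_zero : ∀ x : V, 𝒜 x = ⊥ ↔ x = 0)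
    (d : V →ₗ[Λ] V) (S : Multiset ℝ) (hS : IsBarSpectrum ν 𝒜 d S) (t : ℝ) :
    ∃ U : Submodule Λ V, Module.finrank Λ U = (S.filter (· ≤ t)).card ∧
      ∀ u ∈ U, u ≠ 0 → d u ≠ 0 ∧ 𝒜 u ≤ 𝒜 (d u) + (t : EReal) := by
  classical
  obtain ⟨B, K, e, β, hli, hspan, horth, hdξ, hdζ, hβ, hSeq⟩ := hS
  set p : Fin K → Prop := fun j => β j ≤ t with hp
  haveI : DecidablePred p := fun j => inferInstanceAs (Decidable (β j ≤ t))
  have hcard : (S.filter (· ≤ t)).card = Fintype.card {j : Fin K // p j} := by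
    rw [hSeq]
    exact spec_card β t
  set f : {j : Fin K // p j} → Fin B ⊕ Fin K ⊕ Fin K := fun j => Sum.inr (Sum.inl j.1) with hf
  have hfinj : Function.Injective f := by
    intro a b hab
    simp only [hf, Sum.inr.injEq, Sum.inl.injEq] at hab
    exact Subtype.ext hab
  have hgli : LinearIndependent Λ (e ∘ f) := hli.comp f hfinj
  refine ⟨Submodule.span Λ (Set.range (e ∘ f)), ?_, ?_⟩
  · rw [finrank_span_eq_card hgli, hcard]
  intro u hu hu0
  obtain ⟨c, hc⟩ := (Submodule.mem_span_range_iff_exists_fun Λ).mp hu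
  set lam : Fin B ⊕ Fin K ⊕ Fin K → Λ :=
    Sum.elim (fun _ => 0)
      (Sum.elim (fun k => if h : p k then c ⟨k, h⟩ else 0) (fun _ => 0)) with hlam
  have hsum : ∑ i, lam i • e i = u := by
    rw [Fintype.sum_sum_type, Fintype.sum_sum_type]
    simp only [hlam, Sum.elim_inl, Sum.elim_inr, zero_smul, Finset.sum_const_zero,
      add_zero, zero_add]
    rw [← hc]
    have e1 : ∑ k : Fin K, (if h : p k then c ⟨k, h⟩ else 0) • e (Sum.inr (Sum.inl k))
        = ∑ k ∈ Finset.univ.filter p, (if h : p k then c ⟨k, h⟩ else 0) • e (Sum.inr (Sum.inl k)) := by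
      symm
      apply Finset.sum_filter_of_ne
      intro k _ hk
      by_contra hpk
      rw [dif_neg hpk, zero_smul] at hk
      exact hk rfl
    have e2 := Finset.sum_subtype (p := p) (F := inferInstance) (Finset.univ.filter p) (fun k => by simp)
      (fun k => (if h : p k then c ⟨k, h⟩ else 0) • e (Sum.inr (Sum.inl k)))
    rw [e1, e2]
    apply Finset.sum_congr rfl
    intro j _
    rw [dif_pos j.2]
    rfl
  have h1 : 𝒜 u = Finset.univ.sup fun i => 𝒜 (e i) - ν (lam i) := by
    rw [← hsum]; exact horth lam
  set lam' : Fin B ⊕ Fin K ⊕ Fin K → Λ :=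
    Sum.elim (fun _ => 0)
      (Sum.elim (fun _ => 0) (fun k => lam (Sum.inr (Sum.inl k)))) with hlam'
  have hdsum : ∑ i, lam' i • e i = d u := by
    conv_rhs => rw [← hsum]
    rw [map_sum]
    simp only [map_smul]
    rw [Fintype.sum_sum_type, Fintype.sum_sum_type, Fintype.sum_sum_type, Fintype.sum_sum_type]
    simp only [hlam', hlam, Sum.elim_inl, Sum.elim_inr, zero_smul, Finset.sum_const_zero,
      add_zero, zero_add, hdζ]
  have h2 : 𝒜 (d u) = Finset.univ.sup fun i => 𝒜 (e i) - ν (lam' i) := by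
    rw [← hdsum]; exact horth lam'
  have hkey : 𝒜 u ≤ 𝒜 (d u) + (t : EReal) := by
    rw [h1]
    apply Finset.sup_le
    rintro (i | k | k) _
    · have hz : ν (lam (Sum.inl i)) = ⊤ := (hν_zero _).mpr (by simp [hlam])
      rw [hz, EReal.sub_top]
      exact bot_le
    · by_cases hpk : p k
      · have hlamk : lam (Sum.inr (Sum.inl k)) = c ⟨k, hpk⟩ := by simp [hlam, dif_pos hpk]
        by_cases hc0 : c ⟨k, hpk⟩ = 0
        · have hz : ν (lam (Sum.inr (Sum.inl k))) = ⊤ := (hν_zero _).mpr (by rw [hlamk, hc0])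
          rw [hz, EReal.sub_top]
          exact bot_le
        · obtain ⟨rL, hrL⟩ := ereal_real (hν_ne_bot _)
            (fun hh => hc0 (by rw [← hlamk]; exact (hν_zero _).mp hh))
          have hηne : e (Sum.inr (Sum.inr k)) ≠ 0 := hli.ne_zero _
          obtain ⟨rη, hrη⟩ := ereal_real (fun hb => hηne ((h𝒜_zero _).mp hb)) (h𝒜_ne_top _)
          have hζ : 𝒜 (e (Sum.inr (Sum.inl k))) = ((β k + rη : ℝ) : EReal) := by
            have hζne : e (Sum.inr (Sum.inl k)) ≠ 0 := hli.ne_zero _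
            refine filt_zeta (fun hb => hζne ((h𝒜_zero _).mp hb)) (h𝒜_ne_top _) ?_
            rw [← hrη]
            exact hβ k
          have hterm : 𝒜 (e (Sum.inr (Sum.inr k))) - ν (lam' (Sum.inr (Sum.inr k))) ≤ 𝒜 (d u) := by
            rw [h2]
            exact Finset.le_sup (f := fun i => 𝒜 (e i) - ν (lam' i))
              (Finset.mem_univ (Sum.inr (Sum.inr k)))
          have hlam'k : lam' (Sum.inr (Sum.inr k)) = lam (Sum.inr (Sum.inl k)) := by
            simp [hlam']
          rw [hlam'k, hrη, hrL] at hterm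
          rw [hζ, hrL]
          calc ((β k + rη : ℝ) : EReal) - (rL : EReal)
              = ((β k + rη - rL : ℝ) : EReal) := by rw [EReal.coe_sub]
            _ ≤ ((rη - rL : ℝ) : EReal) + (t : EReal) := by
                rw [← EReal.coe_add]
                exact_mod_cast (by linarith [hpk] : β k + rη - rL ≤ rη - rL + t)
            _ ≤ 𝒜 (d u) + (t : EReal) := by
                apply add_le_add_left
                rw [EReal.coe_sub]
                exact hterm
      · have hz : ν (lam (Sum.inr (Sum.inl k))) = ⊤ :=
          (hν_zero _).mpr (by simp [hlam, dif_neg hpk])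
        rw [hz, EReal.sub_top]
        exact bot_le
    · have hz : ν (lam (Sum.inr (Sum.inr k))) = ⊤ := (hν_zero _).mpr (by simp [hlam])
      rw [hz, EReal.sub_top]
      exact bot_le
  refine ⟨?_, hkey⟩
  intro hdu0
  rw [(h𝒜_zero _).mpr hdu0, EReal.bot_add] at hkey
  exact hu0 ((h𝒜_zero u).mp (le_bot_iff.mp hkey))

private lemma bar_upper {Λ V : Type*} [Field Λ] [AddCommGroup V] [Module Λ V]
    [FiniteDimensional Λ V]
    (ν : Λ → EReal) (hν_ne_bot : ∀ x : Λ, ν x ≠ ⊥) (hν_zero : ∀ x : Λ, ν x = ⊤ ↔ x = 0)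
    (𝒜 : V → EReal) (h𝒜_ne_top : ∀ x : V, 𝒜 x ≠ ⊤) (h𝒜_zero : ∀ x : V, 𝒜 x = ⊥ ↔ x = 0)
    (d₀ : V →ₗ[Λ] V) (hd02 : d₀ ∘ₗ d₀ = 0)
    (S₀ : Multiset ℝ) (hS₀ : IsBarSpectrum ν 𝒜 d₀ S₀) (t : ℝ) (U : Submodule Λ V)
    (hU : ∀ u ∈ U, u ≠ 0 → d₀ u ≠ 0 ∧ 𝒜 u ≤ 𝒜 (d₀ u) + (t : EReal)) :
    Module.finrank Λ U ≤ (S₀.filter (· ≤ t)).card := by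
  classical
  obtain ⟨B, K, e, β, hli, hspan, horth, hdξ, hdζ, hβ, hSeq⟩ := hS₀
  set p : Fin K → Prop := fun j => β j ≤ t with hp
  haveI : DecidablePred p := fun j => inferInstanceAs (Decidable (β j ≤ t))
  have hcard : (S₀.filter (· ≤ t)).card = Fintype.card {j : Fin K // p j} := by
    rw [hSeq]
    exact spec_card β t
  set b : Module.Basis (Fin B ⊕ Fin K ⊕ Fin K) Λ V := Module.Basis.mk hli (le_of_eq hspan.symm) with hb
  have hbe : ∀ i, b i = e i := fun i => by rw [hb, Module.Basis.coe_mk]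
  set χ : U →ₗ[Λ] ({j : Fin K // p j} → Λ) :=
    LinearMap.pi fun j =>
      (Finsupp.lapply (Sum.inr (Sum.inl j.1))).comp (b.repr.toLinearMap.comp U.subtype) with hχ
  have hinj : Function.Injective χ := by
    rw [← LinearMap.ker_eq_bot]
    refine (Submodule.eq_bot_iff _).mpr ?_
    intro x hx
    rw [LinearMap.mem_ker] at hx
    by_contra hx0
    have hu0 : (x : V) ≠ 0 := fun h => hx0 (Subtype.ext h)
    obtain ⟨hdu, hle⟩ := hU x x.2 hu0
    set c : (Fin B ⊕ Fin K ⊕ Fin K) → Λ := fun i => b.repr (x : V) i with hcdef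
    have hrepr : ∑ i, c i • e i = (x : V) := by
      have h := b.sum_repr (x : V)
      calc ∑ i, c i • e i = ∑ i, b.repr (x : V) i • b i := by
            refine Finset.sum_congr rfl fun i _ => ?_
            rw [hbe]
        _ = (x : V) := h
    have hgood : ∀ (j : Fin K) (hj : p j), c (Sum.inr (Sum.inl j)) = 0 := by
      intro j hj
      have h := congrFun hx ⟨j, hj⟩
      simpa [hχ, LinearMap.pi_apply, Finsupp.lapply_apply] using h
    have hdη : ∀ j : Fin K, d₀ (e (Sum.inr (Sum.inr j))) = 0 := by
      intro j
      rw [← hdζ j]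
      have h := LinearMap.congr_fun hd02 (e (Sum.inr (Sum.inl j)))
      simpa using h
    set lam' : Fin B ⊕ Fin K ⊕ Fin K → Λ :=
      Sum.elim (fun _ => 0)
        (Sum.elim (fun _ => 0) (fun k => c (Sum.inr (Sum.inl k)))) with hlam'
    have hdsum : ∑ i, lam' i • e i = d₀ (x : V) := by
      conv_rhs => rw [← hrepr]
      rw [map_sum]
      simp only [map_smul]
      rw [Fintype.sum_sum_type, Fintype.sum_sum_type, Fintype.sum_sum_type, Fintype.sum_sum_type]
      simp only [hlam', Sum.elim_inl, Sum.elim_inr, zero_smul, Finset.sum_const_zero,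
        add_zero, zero_add, hdξ, hdζ, hdη, smul_zero]
    have h2 : 𝒜 (d₀ (x : V)) = Finset.univ.sup fun i => 𝒜 (e i) - ν (lam' i) := by
      rw [← hdsum]; exact horth lam'
    have hAdne : 𝒜 (d₀ (x : V)) ≠ ⊥ := fun h => hdu ((h𝒜_zero _).mp h)
    have hne : (Finset.univ : Finset (Fin B ⊕ Fin K ⊕ Fin K)).Nonempty := by
      by_contra hcon
      rw [Finset.not_nonempty_iff_eq_empty] at hcon
      rw [hcon, Finset.sup_empty] at h2
      exact hAdne h2
    obtain ⟨i₀, _, hi₀⟩ :=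
      Finset.exists_mem_eq_sup Finset.univ hne (fun i => 𝒜 (e i) - ν (lam' i))
    rw [← h2] at hi₀
    have hlam'i₀ : lam' i₀ ≠ 0 := by
      intro h0
      rw [h0, (hν_zero 0).mpr rfl, EReal.sub_top] at hi₀
      exact hAdne hi₀
    obtain (i | k₀ | k₀) := i₀
    · exact hlam'i₀ (by simp [hlam'])
    · exact hlam'i₀ (by simp [hlam'])
    · have hc0 : c (Sum.inr (Sum.inl k₀)) ≠ 0 := by
        intro h0
        exact hlam'i₀ (by simp [hlam', h0])
      have hk₀ : ¬ p k₀ := fun hpp => hc0 (hgood k₀ hpp)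
      obtain ⟨rL, hrL⟩ := ereal_real (hν_ne_bot _) (fun hh => hc0 ((hν_zero _).mp hh))
      have hηne : e (Sum.inr (Sum.inr k₀)) ≠ 0 := hli.ne_zero _
      obtain ⟨rη, hrη⟩ := ereal_real (fun hbb => hηne ((h𝒜_zero _).mp hbb)) (h𝒜_ne_top _)
      have hζ : 𝒜 (e (Sum.inr (Sum.inl k₀))) = ((β k₀ + rη : ℝ) : EReal) := by
        have hζne : e (Sum.inr (Sum.inl k₀)) ≠ 0 := hli.ne_zero _
        refine filt_zeta (fun hbb => hζne ((h𝒜_zero _).mp hbb)) (h𝒜_ne_top _) ?_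
        rw [← hrη]
        exact hβ k₀
      have hlam'k : lam' (Sum.inr (Sum.inr k₀)) = c (Sum.inr (Sum.inl k₀)) := by simp [hlam']
      have hAd : 𝒜 (d₀ (x : V)) = ((rη - rL : ℝ) : EReal) := by
        rw [hi₀, hlam'k, hrη, hrL, EReal.coe_sub]
      have h1 : 𝒜 (x : V) = Finset.univ.sup fun i => 𝒜 (e i) - ν (c i) := by
        rw [← hrepr]; exact horth c
      have hxlb : 𝒜 (e (Sum.inr (Sum.inl k₀))) - ν (c (Sum.inr (Sum.inl k₀))) ≤ 𝒜 (x : V) := by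
        rw [h1]
        exact Finset.le_sup (f := fun i => 𝒜 (e i) - ν (c i))
          (Finset.mem_univ (Sum.inr (Sum.inl k₀)))
      rw [hζ, hrL, ← EReal.coe_sub] at hxlb
      rw [hAd] at hle
      have hcontr : ((β k₀ + rη - rL : ℝ) : EReal) ≤ ((rη - rL + t : ℝ) : EReal) := by
        refine hxlb.trans (hle.trans ?_)
        rw [← EReal.coe_add]
      have : β k₀ + rη - rL ≤ rη - rL + t := by exact_mod_cast hcontr
      exact hk₀ (by simpa [hp] using (by linarith : β k₀ ≤ t))
  calc Module.finrank Λ U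
      ≤ Module.finrank Λ ({j : Fin K // p j} → Λ) :=
        LinearMap.finrank_le_finrank_of_injective hinj
    _ = Fintype.card {j : Fin K // p j} := Module.finrank_fintype_fun_eq_card Λ
    _ = (S₀.filter (· ≤ t)).card := hcard.symm

private lemma filt_add_eq' {V : Type*} [AddCommGroup V]
    (𝒜 : V → EReal) (h𝒜_max : ∀ x y : V, 𝒜 (x + y) ≤ max (𝒜 x) (𝒜 y))
    (hneg : ∀ x : V, 𝒜 (-x) = 𝒜 x) {x y : V} (h : 𝒜 y < 𝒜 x) : 𝒜 (x + y) = 𝒜 x := by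
  refine le_antisymm ((h𝒜_max x y).trans_eq (max_eq_left h.le)) ?_
  by_contra hc
  push_neg at hc
  have h2 : 𝒜 x ≤ max (𝒜 (x + y)) (𝒜 (-y)) := by
    have := h𝒜_max (x + y) (-y)
    rwa [add_neg_cancel_right] at this
  rw [hneg] at h2
  exact absurd h2 (not_le.mpr (max_lt hc h))

private lemma ereal_le_sub_of_add_le' {x : EReal} {a b : ℝ} (h : x + (a : EReal) ≤ (b : EReal)) :
    x ≤ ((b - a : ℝ) : EReal) := by
  induction x using EReal.rec with
  | bot => exact bot_le
  | coe r =>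
    rw [← EReal.coe_add] at h
    norm_cast at h ⊢
    linarith
  | top =>
    rw [EReal.top_add_coe] at h
    exact absurd h (by simp)

private lemma transfer {Λ V : Type*} [Field Λ] [AddCommGroup V] [Module Λ V]
    (𝒜 : V → EReal) (h𝒜_ne_top : ∀ x : V, 𝒜 x ≠ ⊤) (h𝒜_zero : ∀ x : V, 𝒜 x = ⊥ ↔ x = 0)
    (h𝒜_max : ∀ x y : V, 𝒜 (x + y) ≤ max (𝒜 x) (𝒜 y))
    (hneg : ∀ x : V, 𝒜 (-x) = 𝒜 x)
    (d d₀ : V →ₗ[Λ] V) {A t : ℝ} (ht : t < A)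
    (hM' : ∀ v : V, 𝒜 ((d₀ - d) v) + (A : EReal) ≤ 𝒜 v)
    (U : Submodule Λ V)
    (hU : ∀ u ∈ U, u ≠ 0 → d u ≠ 0 ∧ 𝒜 u ≤ 𝒜 (d u) + (t : EReal)) :
    ∀ u ∈ U, u ≠ 0 → d₀ u ≠ 0 ∧ 𝒜 u ≤ 𝒜 (d₀ u) + (t : EReal) := by
  intro u hu hu0
  obtain ⟨hdu, hle⟩ := hU u hu hu0
  obtain ⟨ru, hru⟩ := ereal_real (fun h => hu0 ((h𝒜_zero u).mp h)) (h𝒜_ne_top u)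
  obtain ⟨rd, hrd⟩ := ereal_real (fun h => hdu ((h𝒜_zero _).mp h)) (h𝒜_ne_top _)
  have hMle : 𝒜 ((d₀ - d) u) ≤ ((ru - A : ℝ) : EReal) := by
    have h := hM' u
    rw [hru] at h
    exact ereal_le_sub_of_add_le' h
  have hlt : 𝒜 ((d₀ - d) u) < 𝒜 (d u) := by
    rw [hrd]
    refine hMle.trans_lt ?_
    have hrut : ru ≤ rd + t := by
      rw [hru, hrd, ← EReal.coe_add] at hle
      exact_mod_cast hle
    exact_mod_cast (by linarith : ru - A < rd)
  have hkey : 𝒜 (d₀ u) = 𝒜 (d u) := by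
    have hdd : d₀ u = d u + (d₀ - d) u := by
      have hsub : (d₀ - d) u = d₀ u - d u := rfl
      rw [hsub]
      abel
    rw [hdd]
    exact filt_add_eq' 𝒜 h𝒜_max hneg hlt
  constructor
  · intro h0
    rw [h0, (h𝒜_zero (0 : V)).mpr rfl] at hkey
    exact hdu ((h𝒜_zero _).mp hkey.symm)
  · rw [hkey]
    exact hle

/-- If two filtered differentials `d = d₀ + M` on the same filtered
finite-dimensional space over a non-Archimedean field differ by a term `M` of filtration
shift at least `A > 0`, then their bar-length spectra coincide below `A`. -/
theorem barLength_spectra_agree_below_deformation_level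
    {Λ V : Type*} [Field Λ] [AddCommGroup V] [Module Λ V] [FiniteDimensional Λ V]
    (ν : Λ → EReal)
    (hν_ne_bot : ∀ x : Λ, ν x ≠ ⊥)
    (hν_zero : ∀ x : Λ, ν x = ⊤ ↔ x = 0)
    (hν_mul : ∀ x y : Λ, ν (x * y) = ν x + ν y)
    (hν_add : ∀ x y : Λ, min (ν x) (ν y) ≤ ν (x + y))
    (𝒜 : V → EReal)
    (h𝒜_ne_top : ∀ x : V, 𝒜 x ≠ ⊤)
    (h𝒜_zero : ∀ x : V, 𝒜 x = ⊥ ↔ x = 0)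
    (h𝒜_smul : ∀ (l : Λ) (x : V), 𝒜 (l • x) = 𝒜 x - ν l)
    (h𝒜_max : ∀ x y : V, 𝒜 (x + y) ≤ max (𝒜 x) (𝒜 y))
    (d d₀ : V →ₗ[Λ] V)
    (hd2 : d ∘ₗ d = 0) (hd02 : d₀ ∘ₗ d₀ = 0)
    (hd_filt : ∀ x : V, 𝒜 (d x) ≤ 𝒜 x) (hd0_filt : ∀ x : V, 𝒜 (d₀ x) ≤ 𝒜 x)
    (A : ℝ) (hA : 0 < A)
    (hM : ∀ v : V, 𝒜 ((d - d₀) v) + (A : EReal) ≤ 𝒜 v)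
    (S S₀ : Multiset ℝ)
    (hS : IsBarSpectrum ν 𝒜 d S) (hS₀ : IsBarSpectrum ν 𝒜 d₀ S₀) :
    S.filter (fun b => b < A) = S₀.filter (fun b => b < A) := by
  classical
  have hν1 : ν (-1) = 0 := nu_neg_one ν hν_ne_bot hν_zero hν_mul
  have hneg : ∀ x : V, 𝒜 (-x) = 𝒜 x := by
    intro x
    have h := h𝒜_smul (-1) x
    rw [neg_one_smul, hν1] at h
    rw [h]
    exact ereal_sub_zero _
  have hM' : ∀ v : V, 𝒜 ((d₀ - d) v) + (A : EReal) ≤ 𝒜 v := by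
    intro v
    have hsub : (d₀ - d) v = -((d - d₀) v) := by
      have h1 : (d₀ - d) v = d₀ v - d v := rfl
      have h2 : (d - d₀) v = d v - d₀ v := rfl
      rw [h1, h2, neg_sub]
    rw [hsub, hneg]
    exact hM v
  have key : ∀ t : ℝ, t < A → (S.filter (· ≤ t)).card = (S₀.filter (· ≤ t)).card := by
    intro t ht
    apply le_antisymm
    · obtain ⟨U, hrank, hP⟩ := bar_lower ν hν_ne_bot hν_zero 𝒜 h𝒜_ne_top h𝒜_zero d S hS t
      have hP₀ := transfer 𝒜 h𝒜_ne_top h𝒜_zero h𝒜_max hneg d d₀ ht hM' U hP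
      have h := bar_upper ν hν_ne_bot hν_zero 𝒜 h𝒜_ne_top h𝒜_zero d₀ hd02 S₀ hS₀ t U hP₀
      rw [← hrank]
      exact h
    · obtain ⟨U, hrank, hP⟩ := bar_lower ν hν_ne_bot hν_zero 𝒜 h𝒜_ne_top h𝒜_zero d₀ S₀ hS₀ t
      have hP₀ := transfer 𝒜 h𝒜_ne_top h𝒜_zero h𝒜_max hneg d₀ d ht hM U hP
      have h := bar_upper ν hν_ne_bot hν_zero 𝒜 h𝒜_ne_top h𝒜_zero d hd2 S hS t U hP₀
      rw [← hrank]
      exact h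
  have keyPQ : ∀ t : ℝ, t < A →
      ((S.filter (fun b => b < A)).filter (· ≤ t)).card
        = ((S₀.filter (fun b => b < A)).filter (· ≤ t)).card := by
    intro t ht
    have e1 : (S.filter (fun b => b < A)).filter (· ≤ t) = S.filter (· ≤ t) := by
      rw [Multiset.filter_filter]
      exact Multiset.filter_congr fun x _ =>
        ⟨fun h => h.1, fun h => ⟨h, lt_of_le_of_lt h ht⟩⟩
    have e2 : (S₀.filter (fun b => b < A)).filter (· ≤ t) = S₀.filter (· ≤ t) := by
      rw [Multiset.filter_filter]
      exact Multiset.filter_congr fun x _ =>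
        ⟨fun h => h.1, fun h => ⟨h, lt_of_le_of_lt h ht⟩⟩
    rw [e1, e2]
    exact key t ht
  refine eq_of_cumul _ _ ?_
  intro t
  by_cases htA : t < A
  · exact keyPQ t htA
  · push_neg at htA
    set P := S.filter (fun b => b < A) with hPdef
    set Q := S₀.filter (fun b => b < A) with hQdef
    have hPall : ∀ x ∈ P, x < A := fun x hx => (Multiset.mem_filter.mp hx).2
    have hQall : ∀ x ∈ Q, x < A := fun x hx => (Multiset.mem_filter.mp hx).2
    have e1 : P.filter (· ≤ t) = P :=
      Multiset.filter_eq_self.mpr (fun x hx => le_trans (hPall x hx).le htA)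
    have e2 : Q.filter (· ≤ t) = Q :=
      Multiset.filter_eq_self.mpr (fun x hx => le_trans (hQall x hx).le htA)
    rw [e1, e2]
    by_cases h0 : P + Q = 0
    · have hc := congrArg Multiset.card h0
      rw [Multiset.card_add] at hc
      simp only [Multiset.card_zero] at hc
      omega
    · have hne : (P + Q).toFinset.Nonempty := by
        rw [Multiset.toFinset_nonempty]
        exact h0
      set t' := (P + Q).toFinset.max' hne with ht'def
      have ht'A : t' < A := by
        have hmem : t' ∈ P + Q := Multiset.mem_toFinset.mp ((P + Q).toFinset.max'_mem hne)
        rcases Multiset.mem_add.mp hmem with h | h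
        exacts [hPall _ h, hQall _ h]
      have e3 : P.filter (· ≤ t') = P :=
        Multiset.filter_eq_self.mpr fun x hx =>
          Finset.le_max' _ x (Multiset.mem_toFinset.mpr (Multiset.mem_add.mpr (Or.inl hx)))
      have e4 : Q.filter (· ≤ t') = Q :=
        Multiset.filter_eq_self.mpr fun x hx =>
          Finset.le_max' _ x (Multiset.mem_toFinset.mpr (Multiset.mem_add.mpr (Or.inr hx)))
      have hfin := keyPQ t' ht'A
      rw [e3, e4] at hfin
      exact hfin
end

section
/- In the setting of the previous lemma, the homology classes [x₁],...,[x_B] form an orthogonal basis of H(C, d) with respect to the induced filtration H(𝒜)(α) = inf{𝒜(c) : [c] = α}; that is, H(𝒜)(Σ λ_j [x_j]) = max_j (H(𝒜)([x_j]) - ν(λ_j)). -/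
/-- The homology of a differential `d : C → C`, as `ker d / (im d ∩ ker d)`. -/
abbrev Hgy {Λ C : Type*} [Field Λ] [AddCommGroup C] [Module Λ C] (d : C →ₗ[Λ] C) :=
  LinearMap.ker d ⧸
    (Submodule.comap (LinearMap.ker d).subtype (LinearMap.range d))

/-- The induced filtration on homology: infimum of `𝒜` over representatives. -/
noncomputable def inducedFiltration {Λ C : Type*} [Field Λ] [AddCommGroup C] [Module Λ C]
    (d : C →ₗ[Λ] C) (𝒜 : C → EReal) : Hgy d → EReal :=
  fun h => sInf {r : EReal | ∃ x : LinearMap.ker d,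
    Submodule.Quotient.mk x = h ∧ 𝒜 (x : C) = r}

/-- For an orthogonal normal-form basis `(x's, y's, z's)` of a filtered
complex with `d xᵢ = 0`, `d yⱼ = T^{βⱼ} zⱼ`, `d zⱼ = 0`, the homology classes `[xᵢ]`
form an orthogonal basis of `H(C, d)` for the induced filtration `H(𝒜)`. -/
theorem homology_classes_orthogonal_for_induced_filtration
    {Λ C : Type*} [Field Λ] [AddCommGroup C] [Module Λ C]
    (ν : Λ → EReal)
    (hν_ne_bot : ∀ x : Λ, ν x ≠ ⊥)
    (hν_zero : ∀ x : Λ, ν x = ⊤ ↔ x = 0)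
    (hν_mul : ∀ x y : Λ, ν (x * y) = ν x + ν y)
    (hν_add : ∀ x y : Λ, min (ν x) (ν y) ≤ ν (x + y))
    (𝒜 : C → EReal)
    (h𝒜_ne_top : ∀ x : C, 𝒜 x ≠ ⊤)
    (h𝒜_zero : ∀ x : C, 𝒜 x = ⊥ ↔ x = 0)
    (h𝒜_smul : ∀ (l : Λ) (x : C), 𝒜 (l • x) = 𝒜 x - ν l)
    (h𝒜_max : ∀ x y : C, 𝒜 (x + y) ≤ max (𝒜 x) (𝒜 y))
    (B K : ℕ) (b : Module.Basis (Fin B ⊕ Fin K ⊕ Fin K) Λ C)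
    (hortho : IsOrthFamily ν 𝒜 ⇑b)
    (d : C →ₗ[Λ] C) (hd2 : d ∘ₗ d = 0) (hd_filt : ∀ x : C, 𝒜 (d x) ≤ 𝒜 x)
    (Tp : ℝ → Λ) (hTp : ∀ r : ℝ, ν (Tp r) = (r : EReal))
    (β : Fin K → ℝ)
    (hdx : ∀ i : Fin B, d (b (Sum.inl i)) = 0)
    (hdy : ∀ j : Fin K,
      d (b (Sum.inr (Sum.inl j))) = Tp (β j) • b (Sum.inr (Sum.inr j)))
    (hdz : ∀ j : Fin K, d (b (Sum.inr (Sum.inr j))) = 0) :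
    ∀ lam : Fin B → Λ,
      inducedFiltration d 𝒜
          (∑ i : Fin B, lam i •
            (Submodule.Quotient.mk
              (⟨b (Sum.inl i), LinearMap.mem_ker.mpr (hdx i)⟩ : LinearMap.ker d) :
              Hgy d))
        = Finset.univ.sup fun i =>
            inducedFiltration d 𝒜
              (Submodule.Quotient.mk
                (⟨b (Sum.inl i), LinearMap.mem_ker.mpr (hdx i)⟩ : LinearMap.ker d))
              - ν (lam i) := by
  classical
  intro lam
  -- the projection onto the x-span
  set π : C →ₗ[Λ] C :=
    Module.Basis.constr b Λ (Sum.elim (fun i => b (Sum.inl i)) (fun _ => 0)) with hπdef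
  have hπx : ∀ i : Fin B, π (b (Sum.inl i)) = b (Sum.inl i) := fun i => by
    simp [hπdef, Module.Basis.constr_basis]
  have hπr : ∀ j : Fin K ⊕ Fin K, π (b (Sum.inr j)) = 0 := fun j => by
    simp [hπdef, Module.Basis.constr_basis]
  -- π kills the image of d
  have hπd : ∀ v : C, π (d v) = 0 := by
    have hcomp : π ∘ₗ d = 0 := by
      apply b.ext
      rintro (i | j | j)
      · simp [hdx i]
      · simp [hdy j, hπr]
      · simp [hdz j]
    intro v
    exact LinearMap.ext_iff.mp hcomp v
  -- π is filtration-nonincreasing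
  have hπle : ∀ c : C, 𝒜 (π c) ≤ 𝒜 c := by
    intro c
    have hc : (∑ j : Fin B ⊕ Fin K ⊕ Fin K, b.repr c j • b j) = c := b.sum_repr c
    have hπc : π c = ∑ i : Fin B, b.repr c (Sum.inl i) • b (Sum.inl i) := by
      conv_lhs => rw [← hc, map_sum, Fintype.sum_sum_type]
      simp [hπx, hπr]
    have hl : (∑ j : Fin B ⊕ Fin K ⊕ Fin K,
        Sum.elim (fun i => b.repr c (Sum.inl i)) (fun _ => (0:Λ)) j • b j)
        = ∑ i : Fin B, b.repr c (Sum.inl i) • b (Sum.inl i) := by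
      rw [Fintype.sum_sum_type]
      simp
    rw [hπc, ← hl, hortho]
    conv_rhs => rw [← hc, hortho]
    apply Finset.sup_le
    rintro (i | j) _
    · exact Finset.le_sup (f := fun j => 𝒜 (b j) - ν (b.repr c j)) (Finset.mem_univ (Sum.inl i))
    · have h0 : ν (0:Λ) = ⊤ := (hν_zero 0).mpr rfl
      have hb : 𝒜 (b (Sum.inr j)) -
          ν (Sum.elim (fun i => b.repr c (Sum.inl i)) (fun _ => (0:Λ)) (Sum.inr j)) = ⊥ := by
        simp [h0, EReal.sub_top]
      rw [hb]
      exact bot_le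
  -- combinations of the x's are cycles
  have hker : ∀ mu : Fin B → Λ, (∑ i : Fin B, mu i • b (Sum.inl i)) ∈ LinearMap.ker d := by
    intro mu
    rw [LinearMap.mem_ker, map_sum]
    simp only [map_smul, hdx, smul_zero, Finset.sum_const_zero]
  -- key lemma: induced filtration of [x] equals 𝒜 x for x in the x-span
  have key : ∀ mu : Fin B → Λ,
      inducedFiltration d 𝒜
        (Submodule.Quotient.mk (⟨∑ i : Fin B, mu i • b (Sum.inl i), hker mu⟩ : LinearMap.ker d))
        = 𝒜 (∑ i : Fin B, mu i • b (Sum.inl i)) := by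
    intro mu
    set x : C := ∑ i : Fin B, mu i • b (Sum.inl i) with hxdef
    have hπxx : π x = x := by
      rw [hxdef, map_sum]
      simp [hπx]
    apply le_antisymm
    · exact sInf_le ⟨⟨x, hker mu⟩, rfl, rfl⟩
    · apply le_sInf
      rintro r ⟨c, hmk, rfl⟩
      rw [Submodule.Quotient.eq] at hmk
      rw [Submodule.mem_comap] at hmk
      obtain ⟨v, hv⟩ := hmk
      have hsub : (c : C) - x = d v := by rw [hv]; rfl
      have hπcx : π c = x := by
        have hcx : (c : C) = x + d v := by rw [← hsub]; abel
        rw [hcx, map_add, hπd, hπxx, add_zero]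
      calc 𝒜 x = 𝒜 (π c) := by rw [hπcx]
        _ ≤ 𝒜 (c : C) := hπle c
  -- special case: single basis vector
  have key1 : ∀ i : Fin B,
      inducedFiltration d 𝒜
        (Submodule.Quotient.mk (⟨b (Sum.inl i), LinearMap.mem_ker.mpr (hdx i)⟩ : LinearMap.ker d))
        = 𝒜 (b (Sum.inl i)) := by
    intro i
    set mu : Fin B → Λ := fun i' => if i' = i then 1 else 0 with hmudef
    have hsum : (∑ i' : Fin B, mu i' • b (Sum.inl i')) = b (Sum.inl i) := by
      rw [Finset.sum_eq_single i]
      · simp [hmudef]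
      · intro j _ hj
        simp [hmudef, hj]
      · intro h
        exact absurd (Finset.mem_univ i) h
    have hq : (⟨∑ i' : Fin B, mu i' • b (Sum.inl i'), hker mu⟩ : LinearMap.ker d)
        = ⟨b (Sum.inl i), LinearMap.mem_ker.mpr (hdx i)⟩ := Subtype.ext hsum
    have h := key mu
    rw [hq, hsum] at h
    exact h
  -- rewrite the LHS quotient sum
  have hmkeq : (∑ i : Fin B, lam i •
      (Submodule.Quotient.mk
        (⟨b (Sum.inl i), LinearMap.mem_ker.mpr (hdx i)⟩ : LinearMap.ker d) : Hgy d))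
      = Submodule.Quotient.mk (⟨∑ i : Fin B, lam i • b (Sum.inl i), hker lam⟩ : LinearMap.ker d) := by
    simp only [← Submodule.mkQ_apply, ← map_smul, ← map_sum]
    congr 1
    ext
    simp
  rw [hmkeq, key lam]
  simp only [key1]
  have hs : (∑ j : Fin B ⊕ Fin K ⊕ Fin K, Sum.elim lam (fun _ : Fin K ⊕ Fin K => (0:Λ)) j • b j)
      = ∑ i : Fin B, lam i • b (Sum.inl i) := by
    rw [Fintype.sum_sum_type]
    simp
  rw [← hs, hortho (Sum.elim lam (fun _ => 0))]
  apply le_antisymm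
  · apply Finset.sup_le
    rintro (i | j) _
    · exact Finset.le_sup (f := fun i => 𝒜 (b (Sum.inl i)) - ν (lam i)) (Finset.mem_univ i)
    · have h0 : ν (0:Λ) = ⊤ := (hν_zero 0).mpr rfl
      have hb : 𝒜 (b (Sum.inr j)) - ν (Sum.elim lam (fun _ : Fin K ⊕ Fin K => (0:Λ)) (Sum.inr j)) = ⊥ := by
        simp [h0, EReal.sub_top]
      rw [hb]
      exact bot_le
  · apply Finset.sup_le
    intro i _
    exact Finset.le_sup
      (f := fun j : Fin B ⊕ Fin K ⊕ Fin K => 𝒜 (b j) - ν (Sum.elim lam (fun _ => (0:Λ)) j))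
      (Finset.mem_univ (Sum.inl i))
end
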